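/- Let u and v be 012-strings of the same length and p ∈ ℕ. Then u →ᵖ v in the sense of label strings (Pieri chains with the crossing condition i_s < j_t for s ≤ t) holds if and only if there is a chain u = u⁰ →¹ u¹ →¹ ... →¹ uᵖ = v in which the indices satisfy the stronger condition jₜ ≤ i_{t+1} for all t (the non-overlapping condition of the geometric Pieri rule). -/

import Mathlib

inductive PieriType | A | B | C | D | E | F
deriving DecidableEq

open PieriType in
/-- The 15 rules of Table 1: (type, (a₁,b₁), S, (a₂,b₂)). -/
def pieriRules : List (PieriType × (ℕ × ℕ) × List ℕ × (ℕ × ℕ)) :=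
  [ (A, (0,2), [], (2,0)),
    (B, (3,2), [0], (2,3)),
    (C, (0,4), [0], (4,0)),
    (D, (1,2), [0], (2,1)),
    (D, (1,2), [0,3], (5,7)),
    (D, (7,5), [0,3], (2,1)),
    (D, (7,5), [0,3], (5,7)),
    (E, (1,4), [0,2], (4,1)),
    (E, (1,4), [0,2], (2,3)),
    (E, (3,5), [0,2], (4,1)),
    (E, (3,5), [0,2], (2,3)),
    (F, (0,5), [], (5,0)),
    (F, (0,5), [0,2,4], (6,1)),
    (F, (1,6), [0,2,4], (5,0)),
    (F, (1,6), [0,2,4], (6,1)) ]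

/-- `u →¹ v` with index `(i,j)` using a rule of the given type. -/
def PieriStep (u v : List ℕ) (i j : ℕ) (ty : PieriType) : Prop :=
  ∃ r ∈ pieriRules, r.1 = ty ∧ i < j ∧ j < u.length ∧ v.length = u.length ∧
    u.getD i 8 = r.2.1.1 ∧ v.getD i 8 = r.2.1.2 ∧
    u.getD j 8 = r.2.2.2.1 ∧ v.getD j 8 = r.2.2.2.2 ∧
    (∀ k, i < k → k < j → u.getD k 8 ∈ r.2.2.1) ∧
    (∀ k, k ≠ i → k ≠ j → u.getD k 8 = v.getD k 8)

/-- A Pieri chain: consecutive steps with the crossing condition `i_s < j_t` for `s ≤ t`. -/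
def IsPieriChain (L : List (List ℕ)) (idx : ℕ → ℕ × ℕ) (ty : ℕ → PieriType) : Prop :=
  (∀ t, t + 1 < L.length →
      PieriStep (L.getD t []) (L.getD (t+1) []) (idx t).1 (idx t).2 (ty t)) ∧
  (∀ s t, s ≤ t → t + 1 < L.length → (idx s).1 < (idx t).2)

/-- `u →ᵖ v` : there is a Pieri chain of length `p` from `u` to `v`. -/
def PieriRel (p : ℕ) (u v : List ℕ) : Prop :=
  ∃ L idx ty, L.length = p + 1 ∧ L.getD 0 [] = u ∧ L.getD p [] = v ∧ IsPieriChain L idx ty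

/-- A chain is right-increasing if `j₁ < j₂ < ⋯ < j_p`. -/
def RightIncreasing (L : List (List ℕ)) (idx : ℕ → ℕ × ℕ) : Prop :=
  ∀ s t, s < t → t + 1 < L.length → (idx s).2 < (idx t).2

def IsLabelString (u : List ℕ) : Prop := ∀ x ∈ u, x ≤ 7
def Is012String (u : List ℕ) : Prop := ∀ x ∈ u, x ≤ 2

/-- Auxiliary invariant: the rightmost "high" (≥ 3) entry is a 3. -/
def PInv (u : List ℕ) : Prop :=
  ∃ q, q < u.length ∧ u.getD q 8 = 3 ∧ ∀ k, q < k → k < u.length → u.getD k 8 ≤ 2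

lemma getD_le_two {u : List ℕ} (h : Is012String u) {k : ℕ} (hk : k < u.length) :
    u.getD k 8 ≤ 2 := by
  rw [List.getD_eq_getElem u 8 hk]
  exact h _ (List.getElem_mem hk)

lemma is012_of_getD {v : List ℕ} (h : ∀ k, k < v.length → v.getD k 8 ≤ 2) :
    Is012String v := by
  intro x hx
  obtain ⟨k, hk, rfl⟩ := List.mem_iff_getElem.mp hx
  rw [← List.getD_eq_getElem v 8 hk]
  exact h k hk

lemma pinv_not_012 {u : List ℕ} (h : PInv u) (h012 : Is012String u) : False := by
  obtain ⟨q, hq, h3, -⟩ := h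
  have := getD_le_two h012 hq
  omega

lemma pieriStep_lt {u v : List ℕ} {i j : ℕ} {ty : PieriType}
    (h : PieriStep u v i j ty) : i < j := by
  obtain ⟨r, -, -, hij, -⟩ := h
  exact hij

lemma pinv_of_q {u v : List ℕ} {i j q a₂ b₂ : ℕ}
    (hvlen : v.length = u.length)
    (hvi : v.getD i 8 = a₂) (hvj : v.getD j 8 = b₂)
    (hout : ∀ k, k ≠ i → k ≠ j → u.getD k 8 = v.getD k 8)
    (hq : q < u.length) (h3 : u.getD q 8 = 3)
    (hr2 : ∀ k, q < k → k < u.length → u.getD k 8 ≤ 2)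
    (hqi : q ≠ i) (hqj : q ≠ j)
    (hia : q < i → a₂ ≤ 2) (hjb : q < j → b₂ ≤ 2) : PInv v := by
  refine ⟨q, by omega, by rw [← hout q hqi hqj]; exact h3, ?_⟩
  intro k hk1 hk2
  rw [hvlen] at hk2
  rcases eq_or_ne k i with rfl | hki
  · rw [hvi]; exact hia hk1
  · rcases eq_or_ne k j with rfl | hkj
    · rw [hvj]; exact hjb hk1
    · rw [← hout k hki hkj]; exact hr2 k hk1 hk2

lemma pinv_step {u v : List ℕ} {i j : ℕ} {ty : PieriType}
    (h : PieriStep u v i j ty) (hu : PInv u) : PInv v := by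
  obtain ⟨r, hr, -, hij, hjlen, hvlen, hui, hvi, huj, hvj, hS, hout⟩ := h
  obtain ⟨q, hq, h3, hr2⟩ := hu
  simp only [pieriRules, List.mem_cons, List.not_mem_nil, or_false] at hr
  rcases hr with rfl|rfl|rfl|rfl|rfl|rfl|rfl|rfl|rfl|rfl|rfl|rfl|rfl|rfl|rfl <;>
    dsimp only at hui hvi huj hvj hS
  -- rule 1 : A, i : 0→2, j : 2→0, S = []
  · exact pinv_of_q hvlen hvi hvj hout hq h3 hr2 (by rintro rfl; omega)
      (by rintro rfl; omega) (by omega) (by omega)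
  -- rule 2 : B, i : 3→2, j : 2→3, S = [0]
  · by_cases hqi' : q = i
    · subst hqi'
      refine ⟨j, by omega, hvj, ?_⟩
      intro k hk1 hk2
      rw [hvlen] at hk2
      rw [← hout k (by omega) (by omega)]
      exact hr2 k (by omega) hk2
    · have hiq : ¬ q < i := by intro h; have := hr2 i h (by omega); omega
      have hjq : ¬ q < j := by
        intro h
        have h' : i < q := by omega
        have := hS q h' h
        simp only [List.mem_singleton] at this
        omega
      exact pinv_of_q hvlen hvi hvj hout hq h3 hr2 hqi' (by rintro rfl; omega)
        (by omega) (by omega)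
  -- rule 3 : C, i : 0→4, j : 4→0, S = [0]
  · have hjq : ¬ q < j := fun h => by have := hr2 j h hjlen; omega
    exact pinv_of_q hvlen hvi hvj hout hq h3 hr2 (by rintro rfl; omega)
      (by rintro rfl; omega) (by omega) (by omega)
  -- rule 4 : D, i : 1→2, j : 2→1, S = [0]
  · exact pinv_of_q hvlen hvi hvj hout hq h3 hr2 (by rintro rfl; omega)
      (by rintro rfl; omega) (by omega) (by omega)
  -- rule 5 : D, i : 1→5, j : 5→7, S = [0,3]
  · have hjq : ¬ q < j := fun h => by have := hr2 j h hjlen; omega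
    exact pinv_of_q hvlen hvi hvj hout hq h3 hr2 (by rintro rfl; omega)
      (by rintro rfl; omega) (by omega) (by omega)
  -- rule 6 : D, i : 7→5, j : 2→1, S = [0,3]
  · have hiq : ¬ q < i := by intro h; have := hr2 i h (by omega); omega
    exact pinv_of_q hvlen hvi hvj hout hq h3 hr2 (by rintro rfl; omega)
      (by rintro rfl; omega) (by omega) (by omega)
  -- rule 7 : D, i : 7→5, j : 5→7, S = [0,3]
  · have hjq : ¬ q < j := fun h => by have := hr2 j h hjlen; omega
    exact pinv_of_q hvlen hvi hvj hout hq h3 hr2 (by rintro rfl; omega)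
      (by rintro rfl; omega) (by omega) (by omega)
  -- rule 8 : E, i : 1→4, j : 4→1, S = [0,2]
  · have hjq : ¬ q < j := fun h => by have := hr2 j h hjlen; omega
    exact pinv_of_q hvlen hvi hvj hout hq h3 hr2 (by rintro rfl; omega)
      (by rintro rfl; omega) (by omega) (by omega)
  -- rule 9 : E, i : 1→4, j : 2→3, S = [0,2]
  · have hqi : q ≠ i := by rintro rfl; omega
    have hqj : q ≠ j := by rintro rfl; omega
    by_cases hqj' : q < j
    · have hiq : q < i := by
        rcases lt_trichotomy q i with h | h | h
        · exact h
        · exact absurd h hqi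
        · have := hS q h hqj'
          simp only [List.mem_cons, List.mem_singleton, List.not_mem_nil, or_false] at this
          omega
      refine ⟨j, by omega, hvj, ?_⟩
      intro k hk1 hk2
      rw [hvlen] at hk2
      rw [← hout k (by omega) (by omega)]
      exact hr2 k (by omega) hk2
    · exact pinv_of_q hvlen hvi hvj hout hq h3 hr2 hqi hqj (by omega) (by omega)
  -- rule 10 : E, i : 3→5, j : 4→1, S = [0,2]
  · have hjq : ¬ q < j := fun h => by have := hr2 j h hjlen; omega
    exact pinv_of_q hvlen hvi hvj hout hq h3 hr2 (by rintro rfl; omega)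
      (by rintro rfl; omega) (by omega) (by omega)
  -- rule 11 : E, i : 3→5, j : 2→3, S = [0,2]
  · by_cases hqi' : q = i
    · subst hqi'
      refine ⟨j, by omega, hvj, ?_⟩
      intro k hk1 hk2
      rw [hvlen] at hk2
      rw [← hout k (by omega) (by omega)]
      exact hr2 k (by omega) hk2
    · have hiq : ¬ q < i := by intro h; have := hr2 i h (by omega); omega
      have hjq : ¬ q < j := by
        intro h
        have h' : i < q := by omega
        have := hS q h' h
        simp only [List.mem_cons, List.mem_singleton, List.not_mem_nil, or_false] at this
        omega
      exact pinv_of_q hvlen hvi hvj hout hq h3 hr2 hqi' (by rintro rfl; omega)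
        (by omega) (by omega)
  -- rule 12 : F, i : 0→5, j : 5→0, S = []
  · have hjq : ¬ q < j := fun h => by have := hr2 j h hjlen; omega
    exact pinv_of_q hvlen hvi hvj hout hq h3 hr2 (by rintro rfl; omega)
      (by rintro rfl; omega) (by omega) (by omega)
  -- rule 13 : F, i : 0→5, j : 6→1, S = [0,2,4]
  · have hjq : ¬ q < j := fun h => by have := hr2 j h hjlen; omega
    exact pinv_of_q hvlen hvi hvj hout hq h3 hr2 (by rintro rfl; omega)
      (by rintro rfl; omega) (by omega) (by omega)
  -- rule 14 : F, i : 1→6, j : 5→0, S = [0,2,4]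
  · have hjq : ¬ q < j := fun h => by have := hr2 j h hjlen; omega
    exact pinv_of_q hvlen hvi hvj hout hq h3 hr2 (by rintro rfl; omega)
      (by rintro rfl; omega) (by omega) (by omega)
  -- rule 15 : F, i : 1→6, j : 6→1, S = [0,2,4]
  · have hjq : ¬ q < j := fun h => by have := hr2 j h hjlen; omega
    exact pinv_of_q hvlen hvi hvj hout hq h3 hr2 (by rintro rfl; omega)
      (by rintro rfl; omega) (by omega) (by omega)

lemma step_012 {u v : List ℕ} {i j : ℕ} {ty : PieriType}
    (h : PieriStep u v i j ty) (hu : Is012String u) : Is012String v ∨ PInv v := by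
  obtain ⟨r, hr, -, hij, hjlen, hvlen, hui, hvi, huj, hvj, hS, hout⟩ := h
  have ha := getD_le_two hu (show i < u.length by omega)
  have hb := getD_le_two hu hjlen
  simp only [pieriRules, List.mem_cons, List.not_mem_nil, or_false] at hr
  rcases hr with rfl|rfl|rfl|rfl|rfl|rfl|rfl|rfl|rfl|rfl|rfl|rfl|rfl|rfl|rfl <;>
    dsimp only at hui hvi huj hvj hS
  · left
    apply is012_of_getD
    intro k hk
    rw [hvlen] at hk
    rcases eq_or_ne k i with rfl | hki
    · omega
    · rcases eq_or_ne k j with rfl | hkj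
      · omega
      · rw [← hout k hki hkj]; exact getD_le_two hu hk
  · exfalso; omega
  · exfalso; omega
  · left
    apply is012_of_getD
    intro k hk
    rw [hvlen] at hk
    rcases eq_or_ne k i with rfl | hki
    · omega
    · rcases eq_or_ne k j with rfl | hkj
      · omega
      · rw [← hout k hki hkj]; exact getD_le_two hu hk
  · exfalso; omega
  · exfalso; omega
  · exfalso; omega
  · exfalso; omega
  -- rule 9 : creates a 4 at i and a 3 at j
  · right
    exact ⟨j, by omega, hvj, fun k hk1 hk2 => by
      rw [hvlen] at hk2
      rw [← hout k (by omega) (by omega)]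
      exact getD_le_two hu hk2⟩
  · exfalso; omega
  · exfalso; omega
  · exfalso; omega
  · exfalso; omega
  · exfalso; omega
  · exfalso; omega

lemma step_nice {u v : List ℕ} {i j : ℕ} {ty : PieriType} (h : PieriStep u v i j ty)
    (hu : Is012String u) (hv : Is012String v) :
    i < j ∧ j < u.length ∧ v.length = u.length ∧
    u.getD i 8 ≤ 1 ∧ u.getD j 8 = 2 ∧ v.getD i 8 = 2 ∧ v.getD j 8 = u.getD i 8 ∧
    (∀ k, i < k → k < j → u.getD k 8 = 0 ∧ u.getD i 8 = 1) ∧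
    (∀ k, k ≠ i → k ≠ j → u.getD k 8 = v.getD k 8) := by
  obtain ⟨r, hr, -, hij, hjlen, hvlen, hui, hvi, huj, hvj, hS, hout⟩ := h
  have ha := getD_le_two hu (show i < u.length by omega)
  have hb := getD_le_two hu hjlen
  have hc := getD_le_two hv (show j < v.length by omega)
  have hd := getD_le_two hv (show i < v.length by omega)
  simp only [pieriRules, List.mem_cons, List.not_mem_nil, or_false] at hr
  rcases hr with rfl|rfl|rfl|rfl|rfl|rfl|rfl|rfl|rfl|rfl|rfl|rfl|rfl|rfl|rfl <;>
    dsimp only at hui hvi huj hvj hS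
  · refine ⟨hij, hjlen, hvlen, by omega, huj, hvi, by omega, ?_, hout⟩
    intro k h1 h2
    exact absurd (hS k h1 h2) List.not_mem_nil
  · exfalso; omega
  · exfalso; omega
  · refine ⟨hij, hjlen, hvlen, by omega, huj, hvi, by omega, ?_, hout⟩
    intro k h1 h2
    have := hS k h1 h2
    simp only [List.mem_singleton] at this
    exact ⟨this, hui⟩
  · exfalso; omega
  · exfalso; omega
  · exfalso; omega
  · exfalso; omega
  · exfalso; omega
  · exfalso; omega
  · exfalso; omega
  · exfalso; omega
  · exfalso; omega
  · exfalso; omega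
  · exfalso; omega

lemma two_step {u w x : List ℕ} {i j i' j' : ℕ} {ty₁ ty₂ : PieriType}
    (h1 : PieriStep u w i j ty₁) (h2 : PieriStep w x i' j' ty₂)
    (hu : Is012String u) (hw : Is012String w) (hx : Is012String x)
    (hcross : i < j') : j ≤ i' := by
  obtain ⟨hij, hjlen, hwlen, hui, huj, hwi, hwj, hmid, hout⟩ := step_nice h1 hu hw
  obtain ⟨hij', hjlen', hxlen, hwi', hwj', hxi', hxj', hmid', hout'⟩ := step_nice h2 hw hx
  by_contra hcon
  push_neg at hcon
  have hne : i' ≠ i := by intro e; rw [e] at hwi'; omega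
  rcases lt_or_gt_of_ne hne with h' | h'
  · have := hmid' i h' hcross
    omega
  · have h1' := hmid i' h' hcon
    have hwieq : u.getD i' 8 = w.getD i' 8 := hout i' hne (by omega)
    have hj'j : j < j' := by
      rcases lt_trichotomy j' j with h'' | h'' | h''
      · have hh3 := hmid j' hcross h''
        have hh4 := hout j' (by omega) (by omega)
        omega
      · rw [h''] at hwj'; omega
      · exact h''
    have := hmid' j hcon hj'j
    omega

/-- For 012-strings, a Pieri chain (crossing condition) exists iff a chain with the
stronger non-overlapping condition jₜ ≤ i_{t+1} exists. -/
theorem pieri_012_nonoverlap (u v : List ℕ) (p : ℕ)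
    (hu : Is012String u) (hv : Is012String v) :
    PieriRel p u v ↔
      ∃ (L : List (List ℕ)) (idx : ℕ → ℕ × ℕ) (ty : ℕ → PieriType),
        L.length = p + 1 ∧ L.getD 0 [] = u ∧ L.getD p [] = v ∧
        (∀ t, t + 1 < L.length →
          PieriStep (L.getD t []) (L.getD (t+1) []) (idx t).1 (idx t).2 (ty t)) ∧
        (∀ t, t + 2 < L.length → (idx t).2 ≤ (idx (t+1)).1) := by
  constructor
  · rintro ⟨L, idx, ty, hlen, h0, hp, hchain, hcross⟩
    have hInvProp : ∀ d t, t + d ≤ p → PInv (L.getD t []) → PInv (L.getD (t + d) []) := by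
      intro d
      induction d with
      | zero => intro t _ h; exact h
      | succ d ih =>
        intro t ht hI
        have h1 : PInv (L.getD (t + 1) []) := pinv_step (hchain t (by omega)) hI
        have e : t + (d + 1) = (t + 1) + d := by omega
        rw [e]
        exact ih (t + 1) (by omega) h1
    have hnpinv : ¬ PInv (L.getD p []) := by
      rw [hp]; exact fun h => pinv_not_012 h hv
    have h012 : ∀ t, t ≤ p → Is012String (L.getD t []) := by
      intro t
      induction t with
      | zero => intro _; rw [h0]; exact hu
      | succ t ih =>
        intro ht
        rcases step_012 (hchain t (by omega)) (ih (by omega)) with h' | h'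
        · exact h'
        · exfalso
          have h2 := hInvProp (p - (t + 1)) (t + 1) (by omega) h'
          have e : (t + 1) + (p - (t + 1)) = p := by omega
          rw [e] at h2
          exact hnpinv h2
    refine ⟨L, idx, ty, hlen, h0, hp, hchain, ?_⟩
    intro t ht
    exact two_step (hchain t (by omega)) (hchain (t + 1) (by omega))
      (h012 t (by omega)) (h012 (t + 1) (by omega)) (h012 (t + 2) (by omega))
      (hcross t (t + 1) (by omega) (by omega))
  · rintro ⟨L, idx, ty, hlen, h0, hp, hstep, hnov⟩
    refine ⟨L, idx, ty, hlen, h0, hp, hstep, ?_⟩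
    intro s t
    induction t with
    | zero =>
      intro hs h
      have : s = 0 := by omega
      subst this
      exact pieriStep_lt (hstep 0 h)
    | succ t ih =>
      intro hs h
      rcases eq_or_lt_of_le hs with rfl | h'
      · exact pieriStep_lt (hstep (t + 1) h)
      · have h1 := ih (by omega) (by omega)
        have h2 := hnov t (by omega)
        have h3 := pieriStep_lt (hstep (t + 1) h)
        omega
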